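/- Two-level optimality: in ℂ² with H = diag(E₁, E₂), E₁ ≠ E₂, and P₀ the projection onto the span of e = (e₁ + e₂)/√2, one has ‖P₀ − e^{−iHt} P₀ e^{iHt}‖ = |sin((E₂ − E₁)t/2)|; hence arcsin(‖P₀ − P(t)‖) = ‖P₀HP₀^⊥‖ t for 0 ≤ t ≤ π/|E₂ − E₁|, so the bound ϑ(P₀,P(t)) ≤ ‖P₀HP₀^⊥‖ t is attained with equality. -/

import Mathlib

open Real ContinuousLinearMap

lemma exp_eigen {E : Type*} [NormedAddCommGroup E] [NormedSpace ℂ E] [CompleteSpace E]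
    (A : E →L[ℂ] E) (c : ℂ) (x : E) (h : A x = c • x) :
    NormedSpace.exp A x = Complex.exp c • x := by
  have hpow : ∀ n : ℕ, (A ^ n) x = c ^ n • x := by
    intro n
    induction n with
    | zero => simp
    | succ n ih =>
      rw [pow_succ, pow_succ, ContinuousLinearMap.mul_apply, h, map_smul, ih, smul_smul,
        mul_comm]
  have hs : Summable fun n : ℕ => ((n.factorial : ℂ))⁻¹ • A ^ n :=
    NormedSpace.expSeries_summable' A
  have key := (ContinuousLinearMap.apply ℂ E x).map_tsum hs
  rw [NormedSpace.exp_eq_tsum ℂ]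
  simp only [ContinuousLinearMap.apply_apply] at key
  rw [key]
  have h2 : ∀ n : ℕ, (((n.factorial : ℂ))⁻¹ • A ^ n) x = (((n.factorial : ℂ))⁻¹ • c ^ n) • x := by
    intro n
    rw [ContinuousLinearMap.smul_apply, hpow, smul_smul, smul_eq_mul]
  rw [tsum_congr h2, Complex.exp_eq_exp_ℂ, NormedSpace.exp_eq_tsum ℂ,
    (NormedSpace.expSeries_summable' c).tsum_smul_const]

lemma abs_one_sub_exp (θ : ℝ) :
    ‖1 - Complex.exp (θ * Complex.I)‖ = 2 * |Real.sin (θ/2)| := by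
  have hre : (1 - Complex.exp (θ * Complex.I)).re = 1 - Real.cos θ := by
    simp [Complex.exp_ofReal_mul_I_re]
  have him : (1 - Complex.exp (θ * Complex.I)).im = - Real.sin θ := by
    simp [Complex.exp_ofReal_mul_I_im]
  rw [Complex.norm_def, Complex.normSq_apply, hre, him]
  rw [show (1 - Real.cos θ) * (1 - Real.cos θ) + (-Real.sin θ) * (-Real.sin θ)
      = (2 * |Real.sin (θ/2)|)^2 by
    have hs := Real.sin_sq_eq_half_sub (θ/2)
    rw [show 2 * (θ/2) = θ by ring] at hs
    have hp := Real.sin_sq_add_cos_sq θ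
    have hq := sq_abs (Real.sin (θ/2))
    nlinarith]
  exact Real.sqrt_sq (by positivity)

lemma norm_pair (a b : ℂ) :
    ‖a • (EuclideanSpace.single 0 1 : EuclideanSpace ℂ (Fin 2))
      + b • (EuclideanSpace.single 1 1 : EuclideanSpace ℂ (Fin 2))‖
    = Real.sqrt (‖a‖^2 + ‖b‖^2) := by
  rw [EuclideanSpace.norm_eq, Fin.sum_univ_two]
  congr 2 <;> simp [EuclideanSpace.single_apply]

set_option maxHeartbeats 1000000 in
/-- Two-level optimality: in ℂ², with H = diag(E₁,E₂), E₁ ≠ E₂, and P₀ the projection onto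
the span of e = (e₁+e₂)/√2, one has ‖P₀ − P(t)‖ = |sin((E₂−E₁)t/2)|; consequently
arcsin ‖P₀ − P(t)‖ = ‖P₀ H P₀^⊥‖ · t for 0 ≤ t ≤ π/|E₂−E₁|. -/
theorem two_level_optimality
    (E₁ E₂ : ℝ) (hE : E₁ ≠ E₂)
    (e₁ e₂ e : EuclideanSpace ℂ (Fin 2))
    (he₁ : e₁ = EuclideanSpace.single 0 1) (he₂ : e₂ = EuclideanSpace.single 1 1)
    (he : e = ((Real.sqrt 2 : ℂ))⁻¹ • (e₁ + e₂))
    (H P₀ : EuclideanSpace ℂ (Fin 2) →L[ℂ] EuclideanSpace ℂ (Fin 2))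
    (hH : ∀ x, H x = ((E₁ : ℂ) * inner ℂ e₁ x) • e₁ + ((E₂ : ℂ) * inner ℂ e₂ x) • e₂)
    (hP₀ : ∀ x, P₀ x = (inner ℂ e x : ℂ) • e)
    (P : ℝ → (EuclideanSpace ℂ (Fin 2) →L[ℂ] EuclideanSpace ℂ (Fin 2)))
    (hP : ∀ t : ℝ, P t =
      NormedSpace.exp ((-(Complex.I * t)) • H) ∘L P₀ ∘L NormedSpace.exp ((Complex.I * t) • H)) :
    (∀ t : ℝ, ‖P₀ - P t‖ = |Real.sin ((E₂ - E₁) * t / 2)|) ∧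
    (∀ t : ℝ, 0 ≤ t → t ≤ Real.pi / |E₂ - E₁| →
      Real.arcsin ‖P₀ - P t‖ = ‖P₀ ∘L H ∘L (1 - P₀)‖ * t) := by
  -- coordinate facts
  have hi1 : ∀ x : EuclideanSpace ℂ (Fin 2), (inner ℂ e₁ x : ℂ) = x 0 := by
    intro x; simp [he₁, EuclideanSpace.inner_single_left]
  have hi2 : ∀ x : EuclideanSpace ℂ (Fin 2), (inner ℂ e₂ x : ℂ) = x 1 := by
    intro x; simp [he₂, EuclideanSpace.inner_single_left]
  have hexpand : ∀ x : EuclideanSpace ℂ (Fin 2), x = x 0 • e₁ + x 1 • e₂ := by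
    intro x
    subst he₁ he₂
    ext i
    fin_cases i <;> simp [EuclideanSpace.single_apply]
  have hc0 : ∀ a b : ℂ, (a • e₁ + b • e₂) 0 = a := by
    intro a b; subst he₁ he₂; simp [EuclideanSpace.single_apply]
  have hc1 : ∀ a b : ℂ, (a • e₁ + b • e₂) 1 = b := by
    intro a b; subst he₁ he₂; simp [EuclideanSpace.single_apply]
  have hnp : ∀ a b : ℂ, ‖a • e₁ + b • e₂‖ = Real.sqrt (‖a‖^2 + ‖b‖^2) := by
    intro a b; rw [he₁, he₂]; exact norm_pair a b
  have he₁norm : ‖e₁‖ = 1 := by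
    rw [he₁]; simp [EuclideanSpace.norm_single]
  have hv10 : e₁ 0 = 1 := by rw [he₁]; simp [EuclideanSpace.single_apply]
  have hv11 : e₁ 1 = 0 := by rw [he₁]; simp [EuclideanSpace.single_apply]
  have hv20 : e₂ 0 = 0 := by rw [he₂]; simp [EuclideanSpace.single_apply]
  have hv21 : e₂ 1 = 1 := by rw [he₂]; simp [EuclideanSpace.single_apply]
  have hxn : ∀ x : EuclideanSpace ℂ (Fin 2), ‖x‖ = Real.sqrt (‖x 0‖^2 + ‖x 1‖^2) := by
    intro x; nth_rewrite 1 [hexpand x]; rw [hnp]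
  -- eigenvectors
  have hHe₁ : H e₁ = (E₁ : ℂ) • e₁ := by
    rw [hH, hi1, hi2, hv10, hv11]; simp
  have hHe₂ : H e₂ = (E₂ : ℂ) • e₂ := by
    rw [hH, hi1, hi2, hv20, hv21]; simp
  have hU1 : ∀ z : ℂ, NormedSpace.exp (z • H) e₁ = Complex.exp (z * E₁) • e₁ := by
    intro z
    exact exp_eigen _ _ _ (by rw [ContinuousLinearMap.smul_apply, hHe₁, smul_smul])
  have hU2 : ∀ z : ℂ, NormedSpace.exp (z • H) e₂ = Complex.exp (z * E₂) • e₂ := by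
    intro z
    exact exp_eigen _ _ _ (by rw [ContinuousLinearMap.smul_apply, hHe₂, smul_smul])
  have hUx : ∀ (z : ℂ) (x : EuclideanSpace ℂ (Fin 2)),
      NormedSpace.exp (z • H) x
        = (Complex.exp (z * E₁) * x 0) • e₁ + (Complex.exp (z * E₂) * x 1) • e₂ := by
    intro z x
    nth_rewrite 1 [hexpand x]
    rw [map_add, map_smul, map_smul, hU1, hU2, smul_smul, smul_smul,
      mul_comm (x 0), mul_comm (x 1)]
  -- inner with e
  have h2 : ((Real.sqrt 2 : ℂ))⁻¹ * ((Real.sqrt 2 : ℂ))⁻¹ = (2:ℂ)⁻¹ := by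
    rw [← mul_inv, ← Complex.ofReal_mul, Real.mul_self_sqrt (by norm_num)]
    norm_num
  have hie : ∀ y : EuclideanSpace ℂ (Fin 2),
      (inner ℂ e y : ℂ) = ((Real.sqrt 2 : ℂ))⁻¹ * (y 0 + y 1) := by
    intro y
    rw [he, inner_smul_left, inner_add_left, hi1, hi2, map_inv₀, Complex.conj_ofReal]
  have hP₀x : ∀ x : EuclideanSpace ℂ (Fin 2),
      P₀ x = ((2:ℂ)⁻¹ * (x 0 + x 1)) • e₁ + ((2:ℂ)⁻¹ * (x 0 + x 1)) • e₂ := by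
    intro x
    rw [hP₀, hie, he, smul_smul, smul_add,
      show (Real.sqrt 2 : ℂ)⁻¹ * (x 0 + x 1) * (Real.sqrt 2 : ℂ)⁻¹
        = (2:ℂ)⁻¹ * (x 0 + x 1) by rw [← h2]; ring]
  -- the operator K = P₀ H (1 - P₀)
  have hKx : ∀ x : EuclideanSpace ℂ (Fin 2),
      (P₀ ∘L H ∘L (1 - P₀)) x
        = ((((E₁:ℂ) - E₂)/4) * (x 0 - x 1)) • e₁ + ((((E₁:ℂ) - E₂)/4) * (x 0 - x 1)) • e₂ := by
    intro x
    rw [ContinuousLinearMap.comp_apply, ContinuousLinearMap.comp_apply,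
      ContinuousLinearMap.sub_apply, ContinuousLinearMap.one_apply]
    rw [show x - P₀ x = (x 0 - (2:ℂ)⁻¹ * (x 0 + x 1)) • e₁ + (x 1 - (2:ℂ)⁻¹ * (x 0 + x 1)) • e₂ by
      rw [hP₀x]
      nth_rewrite 1 [hexpand x]
      rw [sub_smul, sub_smul]
      abel]
    rw [hH, hi1, hi2, hc0, hc1, hP₀x, hc0, hc1]
    congr 1 <;> · congr 1; push_cast; ring
  have habsμ : ∀ c : ℂ, ‖(((E₁:ℂ) - E₂)/4) * c‖ = |E₂ - E₁|/4 * ‖c‖ := by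
    intro c
    rw [norm_mul, show ((E₁:ℂ) - E₂)/4 = (((E₁ - E₂)/4 : ℝ) : ℂ) by push_cast; ring]
    rw [Complex.norm_real, Real.norm_eq_abs, abs_div, abs_sub_comm]
    norm_num
  have hKnorm : ‖P₀ ∘L H ∘L (1 - P₀)‖ = |E₂ - E₁| / 2 := by
    apply le_antisymm
    · apply ContinuousLinearMap.opNorm_le_bound _ (by positivity)
      intro x
      rw [hKx, hnp, habsμ]
      have hb : (0:ℝ) ≤ |E₂ - E₁|/2 * ‖x‖ := by positivity
      rw [← Real.sqrt_sq hb]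
      apply Real.sqrt_le_sqrt
      have hxsq : ‖x‖^2 = ‖x 0‖^2 + ‖x 1‖^2 := by
        rw [hxn x]; exact Real.sq_sqrt (by positivity)
      have htri : ‖x 0 - x 1‖ ≤ ‖x 0‖ + ‖x 1‖ := norm_sub_le _ _
      have h0 : (0:ℝ) ≤ ‖x 0 - x 1‖ := norm_nonneg _
      have h1 : (0:ℝ) ≤ ‖x 0‖ := norm_nonneg _
      have h2' : (0:ℝ) ≤ ‖x 1‖ := norm_nonneg _
      nlinarith [abs_nonneg (E₂ - E₁), mul_self_le_mul_self h0 htri,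
        sq_nonneg (‖x 0‖ - ‖x 1‖), sq_nonneg (|E₂ - E₁|)]
    · have hcoord0 : (e₁ - e₂ : EuclideanSpace ℂ (Fin 2)) 0 = 1 := by
        rw [PiLp.sub_apply, hv10, hv20]; ring
      have hcoord1 : (e₁ - e₂ : EuclideanSpace ℂ (Fin 2)) 1 = -1 := by
        rw [PiLp.sub_apply, hv11, hv21]; ring
      have hvnorm : ‖(e₁ - e₂ : EuclideanSpace ℂ (Fin 2))‖ = Real.sqrt 2 := by
        rw [show (e₁ - e₂ : EuclideanSpace ℂ (Fin 2)) = (1:ℂ) • e₁ + (-1:ℂ) • e₂ by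
          simp [sub_eq_add_neg], hnp]
        norm_num
      have hval : ‖(P₀ ∘L H ∘L (1 - P₀)) (e₁ - e₂)‖ = |E₂ - E₁|/2 * Real.sqrt 2 := by
        rw [hKx, hcoord0, hcoord1, hnp, habsμ]
        rw [show ((1:ℂ) - (-1)) = 2 by norm_num, show ‖(2:ℂ)‖ = 2 by norm_num]
        rw [show (|E₂ - E₁|/4 * 2)^2 + (|E₂ - E₁|/4 * 2)^2 = (|E₂ - E₁|/2)^2 * 2 by ring]
        rw [Real.sqrt_mul (sq_nonneg _), Real.sqrt_sq (by positivity)]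
      have hv := (P₀ ∘L H ∘L (1 - P₀)).le_opNorm (e₁ - e₂)
      rw [hval, hvnorm] at hv
      exact (mul_le_mul_iff_of_pos_right (by positivity : (0:ℝ) < Real.sqrt 2)).mp hv
  -- the norm of P₀ - P t
  have hnorm : ∀ t : ℝ, ‖P₀ - P t‖ = |Real.sin ((E₂ - E₁) * t / 2)| := by
    intro t
    have hs0 : (0:ℝ) ≤ |Real.sin ((E₂ - E₁) * t / 2)| := abs_nonneg _
    have hw1 : Complex.exp (Complex.I * (t:ℂ) * E₁) * Complex.exp (-(Complex.I * (t:ℂ)) * E₁) = 1 := by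
      rw [← Complex.exp_add, show Complex.I * (t:ℂ) * E₁ + -(Complex.I * (t:ℂ)) * E₁ = 0 by ring,
        Complex.exp_zero]
    have hw2 : Complex.exp (Complex.I * (t:ℂ) * E₂) * Complex.exp (-(Complex.I * (t:ℂ)) * E₁)
        = Complex.exp ((((E₂ - E₁) * t : ℝ) : ℂ) * Complex.I) := by
      rw [← Complex.exp_add]; congr 1; push_cast; ring
    have hw3 : Complex.exp (Complex.I * (t:ℂ) * E₁) * Complex.exp (-(Complex.I * (t:ℂ)) * E₂)
        = Complex.exp ((((E₁ - E₂) * t : ℝ) : ℂ) * Complex.I) := by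
      rw [← Complex.exp_add]; congr 1; push_cast; ring
    have hw1b : Complex.exp (Complex.I * (t:ℂ) * E₂) * Complex.exp (-(Complex.I * (t:ℂ)) * E₂) = 1 := by
      rw [← Complex.exp_add, show Complex.I * (t:ℂ) * E₂ + -(Complex.I * (t:ℂ)) * E₂ = 0 by ring,
        Complex.exp_zero]
    have hcomb : ∀ a b c d : ℂ, (a • e₁ + b • e₂) - (c • e₁ + d • e₂)
        = (a - c) • e₁ + (b - d) • e₂ := by
      intro a b c d; rw [sub_smul, sub_smul]; abel
    have hDx : ∀ x : EuclideanSpace ℂ (Fin 2), (P₀ - P t) x =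
        ((2:ℂ)⁻¹ * (1 - Complex.exp ((((E₂ - E₁) * t : ℝ) : ℂ) * Complex.I)) * x 1) • e₁
        + ((2:ℂ)⁻¹ * (1 - Complex.exp ((((E₁ - E₂) * t : ℝ) : ℂ) * Complex.I)) * x 0) • e₂ := by
      intro x
      have step : ∀ a b : ℂ,
          NormedSpace.exp ((-(Complex.I * (t:ℂ))) • H) (P₀ (a • e₁ + b • e₂))
            = (Complex.exp (-(Complex.I * (t:ℂ)) * E₁) * ((2:ℂ)⁻¹ * (a + b))) • e₁
              + (Complex.exp (-(Complex.I * (t:ℂ)) * E₂) * ((2:ℂ)⁻¹ * (a + b))) • e₂ := by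
        intro a b
        rw [hP₀x, hc0, hc1, hUx (-(Complex.I * (t:ℂ))), hc0, hc1]
      rw [ContinuousLinearMap.sub_apply, hP t, ContinuousLinearMap.comp_apply,
        ContinuousLinearMap.comp_apply, hUx (Complex.I * (t:ℂ)) x, step, hP₀x x, hcomb]
      congr 1
      · congr 1
        linear_combination (-(2:ℂ)⁻¹ * x 0) * hw1 + (-(2:ℂ)⁻¹ * x 1) * hw2
      · congr 1
        linear_combination (-(2:ℂ)⁻¹ * x 1) * hw1b + (-(2:ℂ)⁻¹ * x 0) * hw3
    have habsA : ∀ c : ℂ, ‖(2:ℂ)⁻¹ * (1 - Complex.exp ((((E₂ - E₁) * t : ℝ) : ℂ) * Complex.I)) * c‖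
        = |Real.sin ((E₂ - E₁) * t / 2)| * ‖c‖ := by
      intro c
      rw [norm_mul, norm_mul, show ‖((2:ℂ))⁻¹‖ = 2⁻¹ by norm_num,
        abs_one_sub_exp]
      ring
    have habsB : ∀ c : ℂ, ‖(2:ℂ)⁻¹ * (1 - Complex.exp ((((E₁ - E₂) * t : ℝ) : ℂ) * Complex.I)) * c‖
        = |Real.sin ((E₂ - E₁) * t / 2)| * ‖c‖ := by
      intro c
      rw [norm_mul, norm_mul, show ‖((2:ℂ))⁻¹‖ = 2⁻¹ by norm_num,
        abs_one_sub_exp]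
      rw [show (E₁ - E₂) * t / 2 = -((E₂ - E₁) * t / 2) by ring, Real.sin_neg, abs_neg]
      ring
    have hDnorm : ∀ x : EuclideanSpace ℂ (Fin 2),
        ‖(P₀ - P t) x‖ = |Real.sin ((E₂ - E₁) * t / 2)| * ‖x‖ := by
      intro x
      rw [hDx, hnp, habsA, habsB, hxn x]
      rw [show (|Real.sin ((E₂ - E₁) * t / 2)| * ‖x 1‖)^2
            + (|Real.sin ((E₂ - E₁) * t / 2)| * ‖x 0‖)^2
          = |Real.sin ((E₂ - E₁) * t / 2)|^2 * (‖x 0‖^2 + ‖x 1‖^2) by ring]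
      rw [Real.sqrt_mul (sq_nonneg _), Real.sqrt_sq hs0]
    apply le_antisymm
    · exact ContinuousLinearMap.opNorm_le_bound _ hs0 (fun x => (hDnorm x).le)
    · have hlow := (P₀ - P t).le_opNorm e₁
      rw [hDnorm e₁, he₁norm, mul_one, mul_one] at hlow
      exact hlow
  refine ⟨hnorm, ?_⟩
  intro t ht0 ht1
  have hd0 : (0:ℝ) < |E₂ - E₁| := abs_pos.mpr (sub_ne_zero.mpr (Ne.symm hE))
  rw [hnorm t, hKnorm]
  have habs_u : |(E₂ - E₁) * t / 2| = |E₂ - E₁| * t / 2 := by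
    rw [abs_div, abs_mul, abs_of_nonneg ht0]
    norm_num
  have hub : |(E₂ - E₁) * t / 2| ≤ Real.pi / 2 := by
    rw [habs_u]
    have := (le_div_iff₀ hd0).mp ht1
    linarith
  have hbounds := abs_le.mp hub
  have hsin : |Real.sin ((E₂ - E₁) * t / 2)| = Real.sin |(E₂ - E₁) * t / 2| := by
    rcases abs_cases ((E₂ - E₁) * t / 2) with ⟨h, h'⟩ | ⟨h, h'⟩
    · rw [h, abs_of_nonneg]
      exact Real.sin_nonneg_of_nonneg_of_le_pi h' (by linarith [Real.pi_pos, hbounds.2])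
    · rw [h, Real.sin_neg, abs_of_nonpos (Real.sin_nonpos_of_nonpos_of_neg_pi_le
        (le_of_lt h') (by linarith [Real.pi_pos, hbounds.1]))]
  rw [hsin, Real.arcsin_sin (by linarith [abs_nonneg ((E₂ - E₁) * t / 2), Real.pi_pos]) hub,
    habs_u]
  ring
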